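/- Let J = blkdiag(I_n, -I_m) and let K be J-symmetric ((JK)ᵀ = JK). If λ is an eigenvalue of K with nonzero imaginary part and eigenvector x, then x*Jx = 0 (the eigenvector is J-neutral), and consequently |λ| ≤ min_{η ∈ ℝ} ‖K + ηJ‖ in spectral norm. -/

import Mathlib

open scoped Matrix Matrix.Norms.L2Operator ComplexOrder

open Matrix in
lemma aux_mulVec_norm_le {ι : Type*} [Fintype ι] [DecidableEq ι]
    (M : Matrix ι ι ℝ) (x : ι → ℂ) :
    ‖(WithLp.equiv 2 (ι → ℂ)).symm ((M.map Complex.ofReal) *ᵥ x)‖ ≤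
      ‖M‖ * ‖(WithLp.equiv 2 (ι → ℂ)).symm x‖ := by
  set u : ι → ℝ := fun i => (x i).re with hu
  set v : ι → ℝ := fun i => (x i).im with hv
  have hre : ∀ i, ((M.map Complex.ofReal *ᵥ x) i).re = (M *ᵥ u) i := by
    intro i
    simp [Matrix.mulVec, dotProduct, Complex.re_sum, Complex.mul_re, hu]
  have him : ∀ i, ((M.map Complex.ofReal *ᵥ x) i).im = (M *ᵥ v) i := by
    intro i
    simp [Matrix.mulVec, dotProduct, Complex.im_sum, Complex.mul_im, hv]
  have hnormsq : ∀ (y : ι → ℂ),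
      ‖(WithLp.equiv 2 (ι → ℂ)).symm y‖ ^ 2 = ∑ i, ‖y i‖ ^ 2 := by
    intro y
    rw [EuclideanSpace.norm_eq, Real.sq_sqrt (by positivity)]
    simp
  have hnormsqR : ∀ (w : ι → ℝ),
      ‖(WithLp.equiv 2 (ι → ℝ)).symm w‖ ^ 2 = ∑ i, (w i) ^ 2 := by
    intro w
    rw [EuclideanSpace.norm_eq, Real.sq_sqrt (by positivity)]
    simp [Real.norm_eq_abs, sq_abs]
  have hR : ∀ (w : ι → ℝ), ∑ i, ((M *ᵥ w) i) ^ 2 ≤ ‖M‖ ^ 2 * ∑ i, (w i) ^ 2 := by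
    intro w
    have := M.l2_opNorm_mulVec ((WithLp.equiv 2 (ι → ℝ)).symm w)
    change ‖(WithLp.equiv 2 (ι → ℝ)).symm (M *ᵥ w)‖ ≤ ‖M‖ * ‖(WithLp.equiv 2 (ι → ℝ)).symm w‖ at this
    have h2 : ‖(WithLp.equiv 2 (ι → ℝ)).symm (M *ᵥ w)‖ ^ 2 ≤
        (‖M‖ * ‖(WithLp.equiv 2 (ι → ℝ)).symm w‖) ^ 2 := by
      apply pow_le_pow_left₀ (norm_nonneg _)
      convert this using 3
    rw [hnormsqR, mul_pow] at h2
    rw [← hnormsqR w]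
    exact h2
  have key : ‖(WithLp.equiv 2 (ι → ℂ)).symm ((M.map Complex.ofReal) *ᵥ x)‖ ^ 2 ≤
      (‖M‖ * ‖(WithLp.equiv 2 (ι → ℂ)).symm x‖) ^ 2 := by
    rw [hnormsq, mul_pow, hnormsq]
    have habs : ∀ (z : ℂ), ‖z‖ ^ 2 = z.re ^ 2 + z.im ^ 2 := by
      intro z
      rw [Complex.sq_norm, Complex.normSq_apply]; ring
    calc ∑ i, ‖(M.map Complex.ofReal *ᵥ x) i‖ ^ 2
        = (∑ i, ((M *ᵥ u) i) ^ 2) + ∑ i, ((M *ᵥ v) i) ^ 2 := by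
          rw [← Finset.sum_add_distrib]
          exact Finset.sum_congr rfl fun i _ => by rw [habs, hre, him]
      _ ≤ ‖M‖ ^ 2 * (∑ i, (u i) ^ 2) + ‖M‖ ^ 2 * ∑ i, (v i) ^ 2 :=
          add_le_add (hR u) (hR v)
      _ = ‖M‖ ^ 2 * ∑ i, ‖x i‖ ^ 2 := by
          rw [← mul_add, ← Finset.sum_add_distrib]
          congr 1
          exact Finset.sum_congr rfl fun i _ => by rw [habs]
  calc ‖(WithLp.equiv 2 (ι → ℂ)).symm ((M.map Complex.ofReal) *ᵥ x)‖
      = Real.sqrt (‖(WithLp.equiv 2 (ι → ℂ)).symm ((M.map Complex.ofReal) *ᵥ x)‖ ^ 2) :=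
        (Real.sqrt_sq (norm_nonneg _)).symm
    _ ≤ Real.sqrt ((‖M‖ * ‖(WithLp.equiv 2 (ι → ℂ)).symm x‖) ^ 2) := Real.sqrt_le_sqrt key
    _ = ‖M‖ * ‖(WithLp.equiv 2 (ι → ℂ)).symm x‖ :=
        Real.sqrt_sq (by positivity)

/-- Let `J = blkdiag(I_n, -I_m)` and `K` be `J`-symmetric (`(J*K)ᵀ = J*K`).
If `λ` is an eigenvalue of `K` with nonzero imaginary part and eigenvector `x`,
then `x* J x = 0` (the eigenvector is `J`-neutral), and consequently
`|λ| ≤ ‖K + η•J‖` in spectral norm for every real `η`. -/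
theorem Jsymmetric_complex_eigenvalue_bound (n m : ℕ)
    (K : Matrix (Fin n ⊕ Fin m) (Fin n ⊕ Fin m) ℝ)
    (J : Matrix (Fin n ⊕ Fin m) (Fin n ⊕ Fin m) ℝ)
    (hJ : J = Matrix.fromBlocks 1 0 0 (-1))
    (hsym : (J * K)ᵀ = J * K)
    (lam : ℂ) (hlam : lam.im ≠ 0)
    (x : (Fin n ⊕ Fin m) → ℂ) (hx : x ≠ 0)
    (heig : (K.map (Complex.ofReal)) *ᵥ x = lam • x) :
    dotProduct (star x) ((J.map (Complex.ofReal)) *ᵥ x) = 0 ∧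
    ∀ η : ℝ, ‖lam‖ ≤ ‖K + η • J‖ := by
  set Jc := J.map Complex.ofReal with hJc
  set Kc := K.map Complex.ofReal with hKc
  have hJsym : Jᵀ = J := by
    subst hJ
    simp [Matrix.fromBlocks_transpose]
  have hstarform : ∀ (A : Matrix (Fin n ⊕ Fin m) (Fin n ⊕ Fin m) ℂ),
      star (dotProduct (star x) (A *ᵥ x)) =
        dotProduct (star x) (Aᴴ *ᵥ x) := by
    intro A
    rw [Matrix.star_dotProduct, star_star, Matrix.star_mulVec,
      ← Matrix.dotProduct_mulVec]
  have hJcH : Jcᴴ = Jc := by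
    ext i j
    simp only [Matrix.conjTranspose_apply, Matrix.map_apply, hJc, Complex.star_def,
      Complex.conj_ofReal]
    rw [← Matrix.transpose_apply J j i, hJsym]
  have hmul : (J * K).map Complex.ofReal = Jc * Kc := by
    ext i j
    simp [Matrix.mul_apply, Matrix.map_apply, hJc, hKc]
  have hJKH : (Jc * Kc)ᴴ = Jc * Kc := by
    rw [← hmul]
    ext i j
    simp only [Matrix.conjTranspose_apply, Matrix.map_apply, Complex.star_def,
      Complex.conj_ofReal]
    rw [← Matrix.transpose_apply (J * K) j i, hsym]
  set a := dotProduct (star x) (Jc *ᵥ x) with ha_def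
  have ha_star : star a = a := by rw [ha_def, hstarform, hJcH]
  have hb : dotProduct (star x) ((Jc * Kc) *ᵥ x) = lam * a := by
    rw [← Matrix.mulVec_mulVec, heig, Matrix.mulVec_smul, dotProduct_smul]
    simp [ha_def]
  have hb_star : star (lam * a) = lam * a := by
    rw [← hb, hstarform, hJKH]
  have ha0 : a = 0 := by
    rw [star_mul', ha_star] at hb_star
    have h2 : (lam - star lam) * a = 0 := by
      rw [sub_mul, hb_star]; ring
    rcases mul_eq_zero.mp h2 with h | h
    · exfalso
      apply hlam
      have h4 : ((2 * lam.im : ℝ) : ℂ) * Complex.I = 0 := by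
        rw [← Complex.sub_conj]
        simpa [Complex.star_def] using h
      simpa using h4
    · exact h
  refine ⟨ha0, fun η => ?_⟩
  set M := K + η • J with hM
  have hMc : M.map Complex.ofReal = Kc + (η : ℂ) • Jc := by
    ext i j
    simp [hM, hJc, hKc, Matrix.map_apply]
  set xE : EuclideanSpace ℂ (Fin n ⊕ Fin m) := (WithLp.equiv 2 _).symm x with hxE
  have hxE0 : xE ≠ 0 := by
    intro h
    apply hx
    have := congrArg (WithLp.equiv 2 ((Fin n ⊕ Fin m) → ℂ)) h
    simpa [hxE] using this
  have hxEpos : (0 : ℝ) < ‖xE‖ := norm_pos_iff.mpr hxE0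
  have hquad : dotProduct (star x) ((M.map Complex.ofReal) *ᵥ x) =
      lam * dotProduct (star x) x := by
    rw [hMc, Matrix.add_mulVec, dotProduct_add, Matrix.smul_mulVec,
      dotProduct_smul, ← ha_def, ha0, heig, dotProduct_smul]
    simp
  have hinner : dotProduct (star x) x = (‖xE‖ : ℂ) ^ 2 := by
    rw [dotProduct_comm, ← EuclideanSpace.inner_toLp_toLp, ← WithLp.equiv_symm_apply, ← hxE]
    exact inner_self_eq_norm_sq_to_K xE
  have hCS : ‖dotProduct (star x) ((M.map Complex.ofReal) *ᵥ x)‖ ≤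
      ‖xE‖ * ‖(WithLp.equiv 2 ((Fin n ⊕ Fin m) → ℂ)).symm ((M.map Complex.ofReal) *ᵥ x)‖ := by
    rw [dotProduct_comm, ← EuclideanSpace.inner_toLp_toLp, ← WithLp.equiv_symm_apply, ← hxE]
    exact norm_inner_le_norm _ _
  have hbound := aux_mulVec_norm_le M x
  have hlhs : ‖dotProduct (star x) ((M.map Complex.ofReal) *ᵥ x)‖ =
      ‖lam‖ * ‖xE‖ ^ 2 := by
    rw [hquad, hinner]
    simp [map_mul, mul_comm]
  have hfinal : ‖lam‖ * ‖xE‖ ^ 2 ≤ ‖M‖ * ‖xE‖ ^ 2 := by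
    rw [← hlhs]
    calc ‖dotProduct (star x) ((M.map Complex.ofReal) *ᵥ x)‖
        ≤ ‖xE‖ * ‖(WithLp.equiv 2 ((Fin n ⊕ Fin m) → ℂ)).symm ((M.map Complex.ofReal) *ᵥ x)‖ := hCS
      _ ≤ ‖xE‖ * (‖M‖ * ‖xE‖) := by
          exact mul_le_mul_of_nonneg_left hbound (norm_nonneg _)
      _ = ‖M‖ * ‖xE‖ ^ 2 := by ring
  have := le_of_mul_le_mul_right (by simpa [mul_comm] using hfinal) (by positivity : (0:ℝ) < ‖xE‖ ^ 2)
  exact this
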